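/- Let (F¹, F²) ∈ ℝ² with (F¹, F²) ≠ (0,0). The space of real arrays (X^i_{jk}) (i, j, k ∈ {1,2}), symmetric in j and k, satisfying the four linear equations 2F¹X¹₁₁ + F²X²₁₁ + F¹X²₁₂ = 0, 2F¹X¹₁₂ + F²X²₁₂ + F¹X²₂₂ = 0, F²X¹₁₁ + F¹X¹₁₂ + 2F²X²₁₂ = 0, F²X¹₁₂ + F¹X¹₂₂ + 2F²X²₂₂ = 0, has dimension 2. (This is the statement dim (g¹_{θ₂})⁽¹⁾ = 2 for the first prolongation of the degree-one part of the isotropy algebra of a generic 2-jet.) -/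
import Mathlib


/- STATEMENT 7: for (F¹,F²) ≠ (0,0), the space of symmetric arrays (X^i_{jk}) satisfying
   2F¹X¹₁₁ + F²X²₁₁ + F¹X²₁₂ = 0, 2F¹X¹₁₂ + F²X²₁₂ + F¹X²₂₂ = 0,
   F²X¹₁₁ + F¹X¹₁₂ + 2F²X²₁₂ = 0, F²X¹₁₂ + F¹X¹₂₂ + 2F²X²₂₂ = 0
   has dimension 2 (i.e. dim (g¹_{θ₂})⁽¹⁾ = 2). -/

/-- The first prolongation of g¹: symmetric arrays X^i_{jk} = `X i j k` (index value `0`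
standing for `1` and `1` for `2`) satisfying the four equations. -/
def P (F1 F2 : ℝ) : Submodule ℝ (Fin 2 → Fin 2 → Fin 2 → ℝ) where
  carrier := {X | (∀ i j k, X i j k = X i k j) ∧
    2*F1*X 0 0 0 + F2*X 1 0 0 + F1*X 1 0 1 = 0 ∧
    2*F1*X 0 0 1 + F2*X 1 0 1 + F1*X 1 1 1 = 0 ∧
    F2*X 0 0 0 + F1*X 0 0 1 + 2*F2*X 1 0 1 = 0 ∧
    F2*X 0 0 1 + F1*X 0 1 1 + 2*F2*X 1 1 1 = 0}
  add_mem' := by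
    rintro X Y ⟨hs, h1, h2, h3, h4⟩ ⟨hs', h1', h2', h3', h4'⟩
    refine ⟨fun i j k => ?_, ?_, ?_, ?_, ?_⟩ <;>
      simp only [Pi.add_apply] <;>
      first
        | rw [hs i j k, hs' i j k]
        | linear_combination h1 + h1'
        | linear_combination h2 + h2'
        | linear_combination h3 + h3'
        | linear_combination h4 + h4'
  zero_mem' := by
    refine ⟨fun i j k => rfl, ?_, ?_, ?_, ?_⟩ <;> simp
  smul_mem' := by
    rintro c X ⟨hs, h1, h2, h3, h4⟩
    refine ⟨fun i j k => ?_, ?_, ?_, ?_, ?_⟩ <;>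
      simp only [Pi.smul_apply, smul_eq_mul] <;>
      first
        | rw [hs i j k]
        | linear_combination c * h1
        | linear_combination c * h2
        | linear_combination c * h3
        | linear_combination c * h4

/-- Build a symmetric array from its six independent entries. -/
def mk (a b c d e f : ℝ) : Fin 2 → Fin 2 → Fin 2 → ℝ :=
  ![![![a, b], ![b, c]], ![![d, e], ![e, f]]]

lemma mk_symm (a b c d e f : ℝ) : ∀ i j k, mk a b c d e f i j k = mk a b c d e f i k j := by
  intro i j k
  fin_cases i <;> fin_cases j <;> fin_cases k <;> rfl

lemma mk_mem (F1 F2 a b c d e f : ℝ)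
    (h1 : 2*F1*a + F2*d + F1*e = 0) (h2 : 2*F1*b + F2*e + F1*f = 0)
    (h3 : F2*a + F1*b + 2*F2*e = 0) (h4 : F2*b + F1*c + 2*F2*f = 0) :
    mk a b c d e f ∈ P F1 F2 := by
  refine ⟨mk_symm a b c d e f, ?_, ?_, ?_, ?_⟩ <;>
    simp only [mk, Matrix.cons_val_zero, Matrix.cons_val_one, Matrix.head_cons] <;>
    assumption

lemma eq_mk_of_mem {F1 F2 : ℝ} {X : Fin 2 → Fin 2 → Fin 2 → ℝ} (hX : X ∈ P F1 F2) :
    X = mk (X 0 0 0) (X 0 0 1) (X 0 1 1) (X 1 0 0) (X 1 0 1) (X 1 1 1) := by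
  obtain ⟨hs, -⟩ := hX
  funext i j k
  fin_cases i <;> fin_cases j <;> fin_cases k <;>
    simp only [mk, Matrix.cons_val_zero, Matrix.cons_val_one, Matrix.head_cons] <;>
    first | rfl | exact hs _ _ _

/-- Projection to the two coordinates that are free when `F1 ≠ 0`. -/
def φ₁ (F1 F2 : ℝ) : P F1 F2 →ₗ[ℝ] ℝ × ℝ where
  toFun X := (X.1 0 0 0, X.1 1 0 0)
  map_add' X Y := rfl
  map_smul' c X := rfl

/-- Projection to the two coordinates that are free when `F2 ≠ 0`. -/
def φ₂ (F1 F2 : ℝ) : P F1 F2 →ₗ[ℝ] ℝ × ℝ where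
  toFun X := (X.1 0 1 1, X.1 1 1 1)
  map_add' X Y := rfl
  map_smul' c X := rfl

theorem stmt7 (F1 F2 : ℝ) (h : ((F1, F2) : ℝ × ℝ) ≠ 0) :
    Module.finrank ℝ (P F1 F2) = 2 := by
  have h' : F1 ≠ 0 ∨ F2 ≠ 0 := by
    by_contra hc
    push_neg at hc
    exact h (by simp [Prod.ext_iff, hc.1, hc.2])
  have key : Nonempty ((P F1 F2) ≃ₗ[ℝ] ℝ × ℝ) := by
    rcases h' with hF | hF
    · refine ⟨LinearEquiv.ofBijective (φ₁ F1 F2) ⟨?_, ?_⟩⟩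
      · intro X Y hXY
        obtain ⟨ha, hd⟩ : X.1 0 0 0 = Y.1 0 0 0 ∧ X.1 1 0 0 = Y.1 1 0 0 :=
          Prod.ext_iff.mp hXY
        obtain ⟨hs, h1, h2, h3, h4⟩ := X.2
        obtain ⟨hs', h1', h2', h3', h4'⟩ := Y.2
        have he : X.1 1 0 1 = Y.1 1 0 1 :=
          mul_left_cancel₀ hF (by linear_combination h1 - h1' - 2*F1*ha - F2*hd)
        have hb : X.1 0 0 1 = Y.1 0 0 1 :=
          mul_left_cancel₀ hF (by linear_combination h3 - h3' - F2*ha - 2*F2*he)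
        have hf : X.1 1 1 1 = Y.1 1 1 1 :=
          mul_left_cancel₀ hF (by linear_combination h2 - h2' - 2*F1*hb - F2*he)
        have hc : X.1 0 1 1 = Y.1 0 1 1 :=
          mul_left_cancel₀ hF (by linear_combination h4 - h4' - F2*hb - 2*F2*hf)
        apply Subtype.ext
        rw [eq_mk_of_mem X.2, eq_mk_of_mem Y.2, ha, hb, hc, hd, he, hf]
      · rintro ⟨a, d⟩
        set e : ℝ := -(2*F1*a + F2*d)/F1 with he
        set b : ℝ := -(F2*a + 2*F2*e)/F1 with hb
        set f : ℝ := -(2*F1*b + F2*e)/F1 with hf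
        set c : ℝ := -(F2*b + 2*F2*f)/F1 with hc
        refine ⟨⟨mk a b c d e f, mk_mem F1 F2 a b c d e f ?_ ?_ ?_ ?_⟩, rfl⟩
        · rw [he]; field_simp <;> ring
        · rw [hf]; field_simp <;> ring
        · rw [hb]; field_simp <;> ring
        · rw [hc]; field_simp <;> ring
    · refine ⟨LinearEquiv.ofBijective (φ₂ F1 F2) ⟨?_, ?_⟩⟩
      · intro X Y hXY
        obtain ⟨hc, hf⟩ : X.1 0 1 1 = Y.1 0 1 1 ∧ X.1 1 1 1 = Y.1 1 1 1 :=
          Prod.ext_iff.mp hXY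
        obtain ⟨hs, h1, h2, h3, h4⟩ := X.2
        obtain ⟨hs', h1', h2', h3', h4'⟩ := Y.2
        have hb : X.1 0 0 1 = Y.1 0 0 1 :=
          mul_left_cancel₀ hF (by linear_combination h4 - h4' - F1*hc - 2*F2*hf)
        have he : X.1 1 0 1 = Y.1 1 0 1 :=
          mul_left_cancel₀ hF (by linear_combination h2 - h2' - 2*F1*hb - F1*hf)
        have ha : X.1 0 0 0 = Y.1 0 0 0 :=
          mul_left_cancel₀ hF (by linear_combination h3 - h3' - F1*hb - 2*F2*he)
        have hd : X.1 1 0 0 = Y.1 1 0 0 :=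
          mul_left_cancel₀ hF (by linear_combination h1 - h1' - 2*F1*ha - F1*he)
        apply Subtype.ext
        rw [eq_mk_of_mem X.2, eq_mk_of_mem Y.2, ha, hb, hc, hd, he, hf]
      · rintro ⟨c, f⟩
        set b : ℝ := -(F1*c + 2*F2*f)/F2 with hb
        set e : ℝ := -(2*F1*b + F1*f)/F2 with he
        set a : ℝ := -(F1*b + 2*F2*e)/F2 with ha
        set d : ℝ := -(2*F1*a + F1*e)/F2 with hd
        refine ⟨⟨mk a b c d e f, mk_mem F1 F2 a b c d e f ?_ ?_ ?_ ?_⟩, rfl⟩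
        · rw [hd]; field_simp <;> ring
        · rw [he]; field_simp <;> ring
        · rw [ha]; field_simp <;> ring
        · rw [hb]; field_simp <;> ring
  obtain ⟨eqv⟩ := key
  rw [eqv.finrank_eq]
  simp
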